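/- arXiv:2012.02020 — 3 statements merged into one kernel-verified Lean document; each statement's English description precedes it below -/
import Mathlib

section
/- Let A ∈ ℝ^{n×n}, B ∈ ℝ^{n×m}, C ∈ ℝ^{m×n}. For i = 1,…,m let dᵢ = min{j : Cᵢ Aʲ B ≠ 0} (or n−1 if no such j ≤ n−1 exists), and let B* be the m×m matrix whose i-th row is Cᵢ A^{dᵢ} B. If B* is invertible, then with Φ = −B*⁻¹ A* and Γ = B*⁻¹, where A* has i-th row Cᵢ A^{dᵢ+1}, the closed-loop system x(t+1) = (A + BΦ)x(t) + BΓ v(t), y(t) = C x(t) satisfies yᵢ(t + dᵢ + 1) = vᵢ(t) for all t ≥ 0 when initialized at x(0) = 0. -/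
open Matrix in
theorem stmt_15 {n m : ℕ}
    (A : Matrix (Fin n) (Fin n) ℝ) (B : Matrix (Fin n) (Fin m) ℝ)
    (C : Matrix (Fin m) (Fin n) ℝ)
    (d : Fin m → ℕ)
    (hd : ∀ i, (Matrix.vecMul (C i) (A ^ d i * B) ≠ 0 ∧
        ∀ j < d i, Matrix.vecMul (C i) (A ^ j * B) = 0) ∨
      (d i = n - 1 ∧ ∀ j ≤ n - 1, Matrix.vecMul (C i) (A ^ j * B) = 0))
    (Bstar : Matrix (Fin m) (Fin m) ℝ) (Astar : Matrix (Fin m) (Fin n) ℝ)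
    (hBstar : ∀ i, Bstar i = Matrix.vecMul (C i) (A ^ d i * B))
    (hAstar : Astar = Matrix.of fun i j => Matrix.vecMul (C i) (A ^ (d i + 1)) j)
    (hB : IsUnit Bstar.det)
    (Φ : Matrix (Fin m) (Fin n) ℝ) (Γ : Matrix (Fin m) (Fin m) ℝ)
    (hΦ : Φ = -(Bstar⁻¹ * Astar)) (hΓ : Γ = Bstar⁻¹)
    (v : ℕ → Fin m → ℝ) (x : ℕ → Fin n → ℝ) (y : ℕ → Fin m → ℝ)
    (hx0 : x 0 = 0)
    (hx : ∀ t, x (t + 1) = (A + B * Φ).mulVec (x t) + (B * Γ).mulVec (v t))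
    (hy : ∀ t, y t = C.mulVec (x t)) :
    ∀ i t, y (t + d i + 1) i = v t i := by
  intro i t
  have hzero : ∀ j < d i, Matrix.vecMul (C i) (A ^ j * B) = 0 := by
    rcases hd i with ⟨_, h⟩ | ⟨hdi, h⟩
    · exact h
    · intro j hj
      exact h j (le_of_lt (hdi ▸ hj))
  have step : ∀ j < d i, ∀ s,
      Matrix.vecMul (C i) (A ^ j) ⬝ᵥ x (s + 1) =
      Matrix.vecMul (C i) (A ^ (j + 1)) ⬝ᵥ x s := by
    intro j hj s
    have hΦz : Matrix.vecMul (C i) (A ^ j * B * Φ) = 0 := by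
      rw [← Matrix.vecMul_vecMul, hzero j hj, Matrix.zero_vecMul]
    have hΓz : Matrix.vecMul (C i) (A ^ j * B * Γ) = 0 := by
      rw [← Matrix.vecMul_vecMul, hzero j hj, Matrix.zero_vecMul]
    have h1 : A ^ j * (A + B * Φ) = A ^ (j + 1) + A ^ j * B * Φ := by
      rw [mul_add, pow_succ, ← Matrix.mul_assoc]
    have h2 : A ^ j * (B * Γ) = A ^ j * B * Γ := (Matrix.mul_assoc _ _ _).symm
    rw [hx s, dotProduct_add, Matrix.dotProduct_mulVec, Matrix.dotProduct_mulVec,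
      Matrix.vecMul_vecMul, Matrix.vecMul_vecMul, h1, h2, Matrix.vecMul_add, hΦz, hΓz,
      add_zero, zero_dotProduct, add_zero]
  have key : ∀ k, k ≤ d i → ∀ s,
      C i ⬝ᵥ x (s + k + 1) = Matrix.vecMul (C i) (A ^ k) ⬝ᵥ x (s + 1) := by
    intro k
    induction k with
    | zero => intro _ s; simp [Matrix.vecMul_one]
    | succ k ih =>
      intro hk s
      have h1 : s + (k + 1) + 1 = (s + 1) + k + 1 := by omega
      rw [h1, ih (by omega) (s + 1)]
      exact step k (by omega) (s + 1)
  have hrow : Matrix.vecMul (Bstar i) Bstar⁻¹ = (1 : Matrix (Fin m) (Fin m) ℝ) i := by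
    have h := Matrix.mul_nonsing_inv Bstar hB
    funext j
    have h' : (Bstar * Bstar⁻¹) i j = Matrix.vecMul (Bstar i) Bstar⁻¹ j := by
      simp [Matrix.mul_apply, Matrix.vecMul, dotProduct]
    rw [← h', h]
  have hArow : Matrix.vecMul (C i) (A ^ (d i + 1)) = Astar i := by
    funext j; rw [hAstar]; rfl
  have hone : Matrix.vecMul ((1 : Matrix (Fin m) (Fin m) ℝ) i) Astar = Astar i := by
    funext j
    simp [Matrix.vecMul, dotProduct, Matrix.one_apply]
  have hBrow : Matrix.vecMul (C i) (A ^ d i * B * Γ) = (1 : Matrix (Fin m) (Fin m) ℝ) i := by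
    rw [← Matrix.vecMul_vecMul, ← hBstar, hΓ, hrow]
  have hPhirow : Matrix.vecMul (C i) (A ^ d i * B * Φ) = -Astar i := by
    rw [← Matrix.vecMul_vecMul, ← hBstar, hΦ, Matrix.vecMul_neg,
      ← Matrix.vecMul_vecMul, hrow, hone]
  have h1 : A ^ d i * (A + B * Φ) = A ^ (d i + 1) + A ^ d i * B * Φ := by
    rw [mul_add, pow_succ, ← Matrix.mul_assoc]
  have h2 : A ^ d i * (B * Γ) = A ^ d i * B * Γ := (Matrix.mul_assoc _ _ _).symm
  have h4 : ((1 : Matrix (Fin m) (Fin m) ℝ) i) ⬝ᵥ v t = v t i := by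
    have h5 := Matrix.one_mulVec (v t)
    calc ((1 : Matrix (Fin m) (Fin m) ℝ) i) ⬝ᵥ v t
        = (1 : Matrix (Fin m) (Fin m) ℝ).mulVec (v t) i := rfl
      _ = v t i := by rw [h5]
  rw [hy]
  show C i ⬝ᵥ x (t + d i + 1) = v t i
  rw [key (d i) le_rfl t, hx t, dotProduct_add, Matrix.dotProduct_mulVec,
    Matrix.dotProduct_mulVec, Matrix.vecMul_vecMul, Matrix.vecMul_vecMul, h1, h2,
    Matrix.vecMul_add, hArow, hPhirow, add_neg_cancel, zero_dotProduct, zero_add,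
    hBrow, h4]
end

section
/- Let f : ℕ → Matrix (Fin m) (Fin m) ℝ with ‖f‖_{L₁} := max_i ∑_j ∑_τ |f_{ij}(τ)| < 1. Consider any sequences v, r', w : ℕ → ℝ^m satisfying, for all t: (i) ‖v(t)‖_∞ ≤ M + sup_{s ≤ t} ‖r'(s)‖_∞ for some constant M ≥ 0, and (ii) w(t) = ∑_{τ=0}^{t} f(τ) v(t−τ), and (iii) r'(t) = g(t) − w(t) where g is a bounded sequence. Then v is bounded: sup_t ‖v(t)‖_∞ < ∞. -/
theorem stmt_17 {m : ℕ} (f : ℕ → Matrix (Fin m) (Fin m) ℝ)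
    (hf : ∀ i j, Summable (fun τ => |f τ i j|))
    (hL1 : (⨆ i, ∑ j, ∑' τ, |f τ i j|) < 1)
    (v r' w g : ℕ → Fin m → ℝ) (M : ℝ) (hM : 0 ≤ M)
    (hgain : ∀ t i, |v t i| ≤ M + sSup {x : ℝ | ∃ s ≤ t, ∃ j, x = |r' s j|})
    (hw : ∀ t, w t = ∑ τ ∈ Finset.range (t + 1), (f τ).mulVec (v (t - τ)))
    (hr' : ∀ t, r' t = g t - w t)
    (hg : ∃ G : ℝ, ∀ t i, |g t i| ≤ G) :
    ∃ M' : ℝ, ∀ t i, |v t i| ≤ M' := by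
  obtain ⟨G, hG⟩ := hg
  rcases Nat.eq_zero_or_pos m with hm | hm
  · subst hm
    exact ⟨0, fun t i => i.elim0⟩
  have ipos : Nonempty (Fin m) := ⟨⟨0, hm⟩⟩
  set γ := (⨆ i, ∑ j, ∑' τ, |f τ i j|) with hγ
  have hγle : ∀ j : Fin m, ∑ k, ∑' τ, |f τ j k| ≤ γ :=
    fun j => le_ciSup (f := fun i : Fin m => ∑ k, ∑' τ, |f τ i k|) (Set.finite_range _).bddAbove j
  have hγ0 : 0 ≤ γ := by
    refine le_trans ?_ (hγle ⟨0, hm⟩)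
    refine Finset.sum_nonneg fun k _ => tsum_nonneg fun τ => abs_nonneg _
  have hG0 : 0 ≤ G := le_trans (abs_nonneg _) (hG 0 ⟨0, hm⟩)
  refine ⟨(M + G) / (1 - γ), ?_⟩
  intro t i
  have hne : ((Finset.range (t+1)) ×ˢ (Finset.univ : Finset (Fin m))).Nonempty :=
    ⟨(0, ⟨0, hm⟩), by simp⟩
  set N := ((Finset.range (t+1)) ×ˢ (Finset.univ : Finset (Fin m))).sup' hne
    (fun p => |v p.1 p.2|) with hN
  have hvN : ∀ s ≤ t, ∀ k, |v s k| ≤ N := by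
    intro s hs k
    have hmem : (s, k) ∈ (Finset.range (t+1)) ×ˢ (Finset.univ : Finset (Fin m)) :=
      Finset.mem_product.2 ⟨Finset.mem_range.2 (Nat.lt_succ_of_le hs), Finset.mem_univ k⟩
    exact Finset.le_sup' (fun p : ℕ × Fin m => |v p.1 p.2|) hmem
  have hN0 : 0 ≤ N := le_trans (abs_nonneg _) (hvN 0 (Nat.zero_le _) ⟨0, hm⟩)
  have hwb : ∀ s ≤ t, ∀ j : Fin m, |w s j| ≤ γ * N := by
    intro s hs j
    rw [hw]
    calc |(∑ τ ∈ Finset.range (s+1), (f τ).mulVec (v (s - τ))) j|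
        = |∑ τ ∈ Finset.range (s+1), ∑ k, f τ j k * v (s - τ) k| := by
          simp [Matrix.mulVec, dotProduct, Finset.sum_apply]
      _ ≤ ∑ τ ∈ Finset.range (s+1), ∑ k, |f τ j k| * |v (s - τ) k| := by
          refine (Finset.abs_sum_le_sum_abs _ _).trans ?_
          refine Finset.sum_le_sum fun τ _ => ?_
          refine (Finset.abs_sum_le_sum_abs _ _).trans ?_
          exact Finset.sum_le_sum fun k _ => le_of_eq (abs_mul _ _)
      _ ≤ ∑ τ ∈ Finset.range (s+1), ∑ k, |f τ j k| * N := by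
          refine Finset.sum_le_sum fun τ _ => Finset.sum_le_sum fun k _ => ?_
          exact mul_le_mul_of_nonneg_left (hvN _ (le_trans (Nat.sub_le _ _) hs) k)
            (abs_nonneg _)
      _ = (∑ k, ∑ τ ∈ Finset.range (s+1), |f τ j k|) * N := by
          rw [Finset.sum_comm]
          simp [Finset.sum_mul]
      _ ≤ (∑ k, ∑' τ, |f τ j k|) * N := by
          refine mul_le_mul_of_nonneg_right (Finset.sum_le_sum fun k _ => ?_) hN0
          exact Summable.sum_le_tsum _ (fun τ _ => abs_nonneg _) (hf j k)
      _ ≤ γ * N := mul_le_mul_of_nonneg_right (hγle j) hN0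
  have hrb : ∀ s ≤ t, ∀ j : Fin m, |r' s j| ≤ G + γ * N := by
    intro s hs j
    rw [hr']
    calc |(g s - w s) j| = |g s j - w s j| := rfl
      _ ≤ |g s j| + |w s j| := abs_sub _ _
      _ ≤ G + γ * N := add_le_add (hG s j) (hwb s hs j)
  have hsup : ∀ s ≤ t, sSup {x : ℝ | ∃ s' ≤ s, ∃ j, x = |r' s' j|} ≤ G + γ * N := by
    intro s hs
    refine csSup_le ⟨|r' 0 ⟨0, hm⟩|, 0, Nat.zero_le _, ⟨0, hm⟩, rfl⟩ ?_
    rintro x ⟨s', hs', j, rfl⟩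
    exact hrb s' (le_trans hs' hs) j
  have hNb : N ≤ M + G + γ * N := by
    refine Finset.sup'_le _ _ fun p hp => ?_
    obtain ⟨hp1, -⟩ := Finset.mem_product.1 hp
    have h1 := (hgain p.1 p.2).trans
      (add_le_add_right (hsup p.1 (Nat.lt_succ_iff.1 (Finset.mem_range.1 hp1))) M)
    linarith
  have hfin : N ≤ (M + G) / (1 - γ) := by
    rw [le_div_iff₀ (by linarith)]
    nlinarith
  exact le_trans (hvN t le_rfl i) hfin
end

section
/- Let Y ⊆ ℝ^p, W ⊆ ℝ^d be sets, with Pontryagin subtraction Y ∼ U := {z : z + u ∈ Y for all u ∈ U}. Let A ∈ ℝ^{n×n}, B_w ∈ ℝ^{n×d}, C ∈ ℝ^{p×n}, D_w ∈ ℝ^{p×d}. Define Y₀ := Y ∼ D_w W and Y_{t+1} := Y_t ∼ C Aᵗ B_w W (where M W denotes the image set). Then for any x₀, u-forced trajectory term h(t) ∈ ℝ^p, and any disturbance sequence w(0),…,w(t) ∈ W, the condition h(t) ∈ Y_t implies h(t) + C ∑_{j=0}^{t−1} A^{t−j−1} B_w w(j) + D_w w(t) ∈ Y. -/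
/-- Pontryagin (Minkowski) set subtraction. -/
def psub {α : Type*} [Add α] (V U : Set α) : Set α :=
  {z | ∀ u ∈ U, z + u ∈ V}

theorem stmt_18 {n p d : ℕ}
    (A : Matrix (Fin n) (Fin n) ℝ) (Bw : Matrix (Fin n) (Fin d) ℝ)
    (C : Matrix (Fin p) (Fin n) ℝ) (Dw : Matrix (Fin p) (Fin d) ℝ)
    (Y : Set (Fin p → ℝ)) (W : Set (Fin d → ℝ))
    (Ys : ℕ → Set (Fin p → ℝ))
    (hY0 : Ys 0 = psub Y ((fun w => Dw.mulVec w) '' W))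
    (hYs : ∀ t, Ys (t + 1) = psub (Ys t) ((fun w => (C * A ^ t * Bw).mulVec w) '' W)) :
    ∀ (t : ℕ) (h : Fin p → ℝ) (w : ℕ → Fin d → ℝ),
      (∀ j, w j ∈ W) → h ∈ Ys t →
      h + C.mulVec (∑ j ∈ Finset.range t, (A ^ (t - j - 1) * Bw).mulVec (w j)) +
        Dw.mulVec (w t) ∈ Y := by
  intro t
  induction t with
  | zero =>
    intro h w hw hmem
    rw [hY0] at hmem
    simpa [Matrix.mulVec_zero] using hmem (Dw.mulVec (w 0)) ⟨w 0, hw 0, rfl⟩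
  | succ t ih =>
    intro h w hw hmem
    rw [hYs] at hmem
    have h1 : h + (C * A ^ t * Bw).mulVec (w 0) ∈ Ys t :=
      hmem _ ⟨w 0, hw 0, rfl⟩
    have h2 := ih (h + (C * A ^ t * Bw).mulVec (w 0)) (fun j => w (j + 1))
      (fun j => hw (j + 1)) h1
    have hsum : (∑ j ∈ Finset.range (t + 1), (A ^ (t + 1 - j - 1) * Bw).mulVec (w j))
        = (A ^ t * Bw).mulVec (w 0)
          + ∑ j ∈ Finset.range t, (A ^ (t - j - 1) * Bw).mulVec (w (j + 1)) := by
      rw [Finset.sum_range_succ' (fun j => (A ^ (t + 1 - j - 1) * Bw).mulVec (w j)) t]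
      have : ∀ j, t + 1 - (j + 1) - 1 = t - j - 1 := fun j => by omega
      simp only [this, Nat.add_sub_cancel]
      abel
    have key : h + C.mulVec (∑ j ∈ Finset.range (t + 1),
          (A ^ (t + 1 - j - 1) * Bw).mulVec (w j))
        = h + (C * A ^ t * Bw).mulVec (w 0)
          + C.mulVec (∑ j ∈ Finset.range t, (A ^ (t - j - 1) * Bw).mulVec (w (j + 1))) := by
      rw [hsum, Matrix.mulVec_add]
      simp only [← Matrix.mulVec_mulVec, Matrix.mul_assoc]
      abel
    rw [key]
    simpa using h2
end
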